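/- Let f : ℤ[x₁,…,x_N] be a nonzero polynomial of degree d over the integers. Then there exist integers a₁,…,a_N with |a_i| ≤ (d+1)/2 for all i such that f(a₁,…,a_N) ≠ 0. -/

import Mathlib

open MvPolynomial Polynomial

lemma box_lemma : ∀ (N : ℕ) (P : MvPolynomial (Fin N) ℤ), P ≠ 0 →
    ∀ S : Finset ℤ, P.totalDegree < S.card →
    ∃ a : Fin N → ℤ, (∀ i, a i ∈ S) ∧ MvPolynomial.eval a P ≠ 0 := by
  intro N
  induction N with
  | zero =>
    intro P hP S hS
    refine ⟨0, fun i => i.elim0, ?_⟩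
    contrapose! hP
    ext d
    simpa only [Subsingleton.elim d 0, MvPolynomial.eval_zero, MvPolynomial.coeff_zero] using (show MvPolynomial.coeff 0 P = 0 from (DFunLike.congr_fun MvPolynomial.eval_zero P).symm.trans hP)
  | succ N IH =>
    intro P hP S hS
    set q := MvPolynomial.finSuccEquiv ℤ N P with hq
    have hq0 : q ≠ 0 := by
      simp only [hq, Ne, EmbeddingLike.map_eq_zero_iff]
      exact hP
    set n := q.natDegree with hn
    have hQ : q.coeff n ≠ 0 := Polynomial.leadingCoeff_ne_zero.mpr hq0
    have hQdeg : (q.coeff n).totalDegree < S.card := by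
      have h := MvPolynomial.totalDegree_coeff_finSuccEquiv_add_le P n (by rwa [hq] at hQ)
      rw [← hq] at h
      omega
    obtain ⟨r, hrS, hr⟩ := IH (q.coeff n) hQ S hQdeg
    set φ : Polynomial ℤ := q.map (MvPolynomial.eval r) with hφ
    have hφn : φ.coeff n ≠ 0 := by
      rwa [hφ, Polynomial.coeff_map]
    have hφ0 : φ ≠ 0 := fun h => hφn (by simp [h])
    have hφdeg : φ.natDegree < S.card := by
      have h1 : φ.natDegree ≤ n := Polynomial.natDegree_map_le
      have h2 : n ≤ P.totalDegree := by
        rw [hn, hq, MvPolynomial.natDegree_finSuccEquiv]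
        exact MvPolynomial.degreeOf_le_totalDegree P 0
      omega
    have hroots : φ.roots.toFinset.card < S.card :=
      lt_of_le_of_lt ((Multiset.toFinset_card_le _).trans (Polynomial.card_roots' φ)) hφdeg
    have hns : ¬ S ⊆ φ.roots.toFinset := fun h => absurd (Finset.card_le_card h) (by omega)
    obtain ⟨s, hsS, hsroot⟩ := Finset.not_subset.mp hns
    refine ⟨Fin.cons s r, ?_, ?_⟩
    · intro i
      refine Fin.cases ?_ ?_ i
      · simpa using hsS
      · intro j; simpa using hrS j
    · rw [MvPolynomial.eval_eq_eval_mv_eval']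
      intro h
      exact hsroot (Multiset.mem_toFinset.mpr (Polynomial.mem_roots'.mpr ⟨hφ0, h⟩))

/-- Ellenberg--Venkatesh: a nonzero integer polynomial of total degree `d` in `N`
variables has a nonvanishing point with all coordinates of absolute value at most
`(d+1)/2`. -/
theorem stmt_0 (N d : ℕ) (P : MvPolynomial (Fin N) ℤ) (hP : P ≠ 0)
    (hd : P.totalDegree = d) :
    ∃ a : Fin N → ℤ, (∀ i, |a i| ≤ ((d : ℤ) + 1) / 2) ∧ MvPolynomial.eval a P ≠ 0 := by
  set m : ℤ := ((d : ℤ) + 1) / 2 with hm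
  have hcard : P.totalDegree < (Finset.Icc (-m) m).card := by
    rw [hd, Int.card_Icc]
    have : 0 ≤ m := by positivity
    omega
  obtain ⟨a, haS, ha⟩ := box_lemma N P hP _ hcard
  refine ⟨a, fun i => ?_, ha⟩
  have := haS i
  rw [Finset.mem_Icc] at this
  exact abs_le.mpr this
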